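/- In a STRIPS task in which every action has only positive preconditions and exactly one effect (a single add or a single delete), if a plan exists from state s then a plan exists in which no action occurs more than once. -/

import Mathlib

/-- A STRIPS action: positive preconditions `pre`, negative preconditions `npre`,
add effect `add`, delete effect `del`, and a cost. -/
structure Act (V : Type) where
  pre : Finset V
  npre : Finset V
  add : Finset V
  del : Finset V
  cost : ℕ

variable {V : Type} [DecidableEq V]

/-- An action is applicable in a state iff its precondition holds. -/
def app (s : Finset V) (a : Act V) : Prop := a.pre ⊆ s ∧ Disjoint a.npre s

/-- Executing an action: s⟦a⟧ = (s \ del(a)) ∪ add(a). -/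
def exec (s : Finset V) (a : Act V) : Finset V := (s \ a.del) ∪ a.add

/-- Iterated execution of an action sequence. -/
def execSeq (s : Finset V) : List (Act V) → Finset V
  | [] => s
  | a :: π => execSeq (exec s a) π

/-- Iterated applicability of an action sequence. -/
def appSeq (s : Finset V) : List (Act V) → Prop
  | [] => True
  | a :: π => app s a ∧ appSeq (exec s a) π

/-- The cost of an action sequence. -/
def listCost (π : List (Act V)) : ℕ := (π.map Act.cost).sum

lemma execSeq_append (s : Finset V) (α β : List (Act V)) :
    execSeq s (α ++ β) = execSeq (execSeq s α) β := by
  induction α generalizing s with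
  | nil => rfl
  | cons a α ih => simp [execSeq, ih]

lemma appSeq_append (s : Finset V) (α β : List (Act V)) :
    appSeq s (α ++ β) ↔ appSeq s α ∧ appSeq (execSeq s α) β := by
  induction α generalizing s with
  | nil => simp [appSeq, execSeq]
  | cons a α ih => simp [appSeq, execSeq, ih, and_assoc]

lemma app_mono {s t : Finset V} {a : Act V} (h : a.npre = ∅) (hst : s ⊆ t) :
    app s a → app t a := fun ⟨h1, _⟩ => ⟨h1.trans hst, by simp [h]⟩

lemma exec_mono {s t : Finset V} (hst : s ⊆ t) (a : Act V) : exec s a ⊆ exec t a :=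
  Finset.union_subset_union (Finset.sdiff_subset_sdiff hst le_rfl) le_rfl

lemma seq_mono {π : List (Act V)} (hn : ∀ a ∈ π, a.npre = ∅) {s t : Finset V} (hst : s ⊆ t)
    (h : appSeq s π) : appSeq t π ∧ execSeq s π ⊆ execSeq t π := by
  induction π generalizing s t with
  | nil => exact ⟨trivial, hst⟩
  | cons a π ih =>
    obtain ⟨h1, h2⟩ := h
    obtain ⟨ih1, ih2⟩ := ih (fun b hb => hn b (List.mem_cons_of_mem _ hb)) (exec_mono hst a) h2
    exact ⟨⟨app_mono (hn a (List.mem_cons_self)) hst h1, ih1⟩, ih2⟩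

lemma state_grows (π : List (Act V)) (hadd : ∀ a ∈ π, a.del = ∅) (s : Finset V) :
    s ⊆ execSeq s π := by
  induction π generalizing s with
  | nil => exact fun _ h => h
  | cons a π ih =>
    refine subset_trans ?_ (ih (fun b hb => hadd b (List.mem_cons_of_mem _ hb)) (exec s a))
    simp [exec, hadd a (List.mem_cons_self)]

lemma dup_split {l : List (Act V)} (h : ¬ l.Nodup) :
    ∃ a α β γ, l = α ++ a :: β ++ a :: γ := by
  induction l with
  | nil => simp at h
  | cons a l ih =>
    by_cases hm : a ∈ l
    · obtain ⟨β, γ, rfl⟩ := List.append_of_mem hm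
      exact ⟨a, [], β, γ, rfl⟩
    · have hl : ¬ l.Nodup := fun hn => h (List.nodup_cons.mpr ⟨hm, hn⟩)
      obtain ⟨b, α, β, γ, rfl⟩ := ih hl
      exact ⟨b, a :: α, β, γ, rfl⟩

lemma removeDeletes (A : Finset (Act V))
    (hA : ∀ a ∈ A, a.npre = ∅ ∧
      ((∃ v, a.add = {v} ∧ a.del = ∅) ∨ (∃ v, a.add = ∅ ∧ a.del = {v}))) :
    ∀ π : List (Act V), (∀ a ∈ π, a ∈ A) → ∀ s, appSeq s π →
    ∃ π', (∀ a ∈ π', a ∈ A ∧ ∃ v, a.add = {v} ∧ a.del = ∅) ∧ appSeq s π' ∧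
      execSeq s π ⊆ execSeq s π' := by
  intro π
  induction π with
  | nil => exact fun _ s _ => ⟨[], by simp, trivial, le_rfl⟩
  | cons a π ih =>
    intro hmem s hs
    obtain ⟨h1, h2⟩ := hs
    have haA : a ∈ A := hmem a (List.mem_cons_self)
    obtain ⟨hnpre, heff⟩ := hA a haA
    rcases heff with ⟨v, hav, had⟩ | ⟨v, hav, had⟩
    · obtain ⟨π', hp1, hp2, hp3⟩ := ih (fun b hb => hmem b (List.mem_cons_of_mem _ hb)) (exec s a) h2
      refine ⟨a :: π', ?_, ⟨h1, hp2⟩, hp3⟩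
      intro b hb
      rcases List.mem_cons.mp hb with rfl | hb
      · exact ⟨haA, v, hav, had⟩
      · exact hp1 b hb
    · have hsub : exec s a ⊆ s := by
        simp [exec, hav]
      have hn : ∀ b ∈ π, b.npre = ∅ :=
        fun b hb => (hA b (hmem b (List.mem_cons_of_mem _ hb))).1
      obtain ⟨h2', hsub'⟩ := seq_mono hn hsub h2
      obtain ⟨π', hp1, hp2, hp3⟩ := ih (fun b hb => hmem b (List.mem_cons_of_mem _ hb)) s h2'
      refine ⟨π', hp1, hp2, ?_⟩
      show execSeq (exec s a) π ⊆ _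
      exact hsub'.trans hp3

lemma dedup_addonly : ∀ (n : ℕ) (π : List (Act V)), π.length ≤ n →
    (∀ a ∈ π, ∃ v, a.add = {v} ∧ a.del = ∅) → ∀ s, appSeq s π →
    ∃ π', (∀ a ∈ π', a ∈ π) ∧ π'.Nodup ∧ appSeq s π' ∧ execSeq s π ⊆ execSeq s π' := by
  intro n
  induction n with
  | zero =>
    intro π hlen _ s _
    have : π = [] := List.eq_nil_of_length_eq_zero (Nat.le_zero.mp hlen)
    subst this
    exact ⟨[], by simp, List.nodup_nil, trivial, le_rfl⟩
  | succ n ih =>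
    intro π hlen hadd s hs
    by_cases hnd : π.Nodup
    · exact ⟨π, fun a h => h, hnd, hs, le_rfl⟩
    · obtain ⟨a, α, β, γ, rfl⟩ := dup_split hnd
      obtain ⟨v, hav, had⟩ := hadd a (by simp)
      have hassoc : α ++ a :: β ++ a :: γ = (α ++ a :: β) ++ a :: γ := by simp
      have h1 : execSeq s (α ++ a :: β) = execSeq (exec (execSeq s α) a) β := by
        rw [show α ++ a :: β = (α ++ [a]) ++ β from by simp, execSeq_append, execSeq_append]
        rfl
      have hvt : v ∈ execSeq s (α ++ a :: β) := by
        have h2 : v ∈ exec (execSeq s α) a := by simp [exec, hav]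
        rw [h1]
        exact state_grows β (fun b hb => (hadd b (by simp [hb])).choose_spec.2) _ h2
      have hexec : exec (execSeq s (α ++ a :: β)) a = execSeq s (α ++ a :: β) := by
        simp only [exec, had, hav, Finset.sdiff_empty]
        exact Finset.union_eq_left.mpr (Finset.singleton_subset_iff.mpr hvt)
      rw [hassoc, appSeq_append] at hs
      obtain ⟨hsu, hsa, hsg⟩ := hs
      rw [hexec] at hsg
      have hnew : appSeq s ((α ++ a :: β) ++ γ) :=
        (appSeq_append s (α ++ a :: β) γ).mpr ⟨hsu, hsg⟩
      have hexeceq : execSeq s (α ++ a :: β ++ a :: γ) = execSeq s ((α ++ a :: β) ++ γ) := by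
        rw [hassoc, execSeq_append, execSeq_append]
        simp only [execSeq]
        rw [← h1, hexec, ← execSeq_append, List.append_assoc, List.cons_append]
      have hlen' : ((α ++ a :: β) ++ γ).length ≤ n := by
        simp at hlen ⊢
        omega
      have hadd' : ∀ b ∈ (α ++ a :: β) ++ γ, ∃ w, b.add = {w} ∧ b.del = ∅ := by
        intro b hb
        apply hadd
        simp at hb ⊢
        tauto
      obtain ⟨π', hp1, hp2, hp3, hp4⟩ := ih ((α ++ a :: β) ++ γ) hlen' hadd' s hnew
      refine ⟨π', ?_, hp2, hp3, by rw [hexeceq]; exact hp4⟩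
      intro b hb
      have := hp1 b hb
      simp at this ⊢
      tauto

/-- Positive preconditions and a single effect per action: if a plan exists from s,
then a plan exists in which no action occurs more than once. -/
theorem posPre_oneEff_nodupPlan (A : Finset (Act V)) (s G : Finset V)
    (hA : ∀ a ∈ A, a.npre = ∅ ∧
      ((∃ v, a.add = {v} ∧ a.del = ∅) ∨ (∃ v, a.add = ∅ ∧ a.del = {v})))
    (h : ∃ π, (∀ a ∈ π, a ∈ A) ∧ appSeq s π ∧ G ⊆ execSeq s π) :
    ∃ π, (∀ a ∈ π, a ∈ A) ∧ π.Nodup ∧ appSeq s π ∧ G ⊆ execSeq s π := by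
  obtain ⟨π, hπA, hπapp, hπG⟩ := h
  obtain ⟨π₁, h1, h2, h3⟩ := removeDeletes A hA π hπA s hπapp
  obtain ⟨π', hm, hnd, happ, hsub⟩ :=
    dedup_addonly π₁.length π₁ le_rfl (fun a ha => (h1 a ha).2) s h2
  exact ⟨π', fun a ha => (h1 a (hm a ha)).1, hnd, happ, hπG.trans (h3.trans hsub)⟩
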